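/- arXiv:1603.02538 — 4 statements merged into one kernel-verified Lean document; each statement's English description precedes it below -/
import Mathlib

section
/- (The explicit example is not gauge-equivalent to an external potential.) Let Dirac matrices be fixed, let m_1 ≥ 0, and let C_0,…,C_3 and c_0,…,c_3 be real constants with at least one C_ν ≠ 0 and at least one c_ν ≠ 0. Define V_1(x_1,x_2) := ((Σ_μ C_μ γ^μ) · exp(2i γ⁵ Σ_λ c_λ x^λ) − m_1 γ⁰) ⊗ I₄ with x := x_2 − x_1, and V_2(x_1,x_2) := γ⁵ ⊗ (Σ_ν c_ν α^ν). Then there exists no twice continuously differentiable function M : ℝ⁸ → ℂ^{16×16} such that both (x_1,x_2) ↦ V_1(x_1,x_2) − Σ_{μ=0}^{3} α^μ_1 (∂M/∂x_1^μ)(x_1,x_2) is independent of x_2 and (x_1,x_2) ↦ V_2(x_1,x_2) − Σ_{ν=0}^{3} α^ν_2 (∂M/∂x_2^ν)(x_1,x_2) is independent of x_1. -/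
/-!
STATEMENT 7: The explicit example
`V_1 = ((Σ_μ C_μ γ^μ) exp(2i γ⁵ c·(x_2−x_1)) − m_1 γ⁰) ⊗ I₄`,
`V_2 = γ⁵ ⊗ (Σ_ν c_ν α^ν)` (with some `C_ν ≠ 0` and some `c_ν ≠ 0`) is not
gauge-equivalent to an external potential: there is no C² function
`M : ℝ⁸ → ℂ^{16×16}` such that `V_1 − Σ_μ α^μ_1 ∂M/∂x_1^μ` is independent of
`x_2` and `V_2 − Σ_ν α^ν_2 ∂M/∂x_2^ν` is independent of `x_1`.
-/

open Matrix
open scoped Kronecker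

noncomputable section

attribute [local instance] Matrix.normedAddCommGroup Matrix.normedSpace

/-- Minkowski metric `diag(1,-1,-1,-1)` (as complex scalars). -/
def Mink (μ ν : Fin 4) : ℂ := if μ = ν then (if μ = 0 then 1 else -1) else 0

/-- A choice of Dirac matrices. -/
structure DiracMatrices where
  γ : Fin 4 → Matrix (Fin 4) (Fin 4) ℂ
  clifford : ∀ μ ν, γ μ * γ ν + γ ν * γ μ = (2 * Mink μ ν) • (1 : Matrix (Fin 4) (Fin 4) ℂ)
  herm : (γ 0)ᴴ = γ 0
  antiherm : ∀ a : Fin 3, (γ a.succ)ᴴ = -γ a.succ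

/-- `α^μ := γ⁰ γ^μ`. -/
def DiracMatrices.α (D : DiracMatrices) (μ : Fin 4) : Matrix (Fin 4) (Fin 4) ℂ :=
  D.γ 0 * D.γ μ

/-- `γ⁵ := i γ⁰ γ¹ γ² γ³`. -/
def DiracMatrices.γ5 (D : DiracMatrices) : Matrix (Fin 4) (Fin 4) ℂ :=
  Complex.I • (D.γ 0 * D.γ 1 * D.γ 2 * D.γ 3)

/-- 4×4 complex matrices. -/
abbrev M4 := Matrix (Fin 4) (Fin 4) ℂ

/-- 16×16 complex matrices, acting on `ℂ¹⁶ ≅ ℂ⁴ ⊗ ℂ⁴` (indexed by `Fin 4 × Fin 4`). -/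
abbrev M16 := Matrix (Fin 4 × Fin 4) (Fin 4 × Fin 4) ℂ

/-- Two-particle configuration space-time `ℝ⁸ = ℝ⁴ × ℝ⁴`. -/
abbrev Pt := (Fin 4 → ℝ) × (Fin 4 → ℝ)

/-- `M_1 := M ⊗ I₄`, `M_2 := I₄ ⊗ M` (Kronecker product). -/
def emb (k : Fin 2) (M : M4) : M16 :=
  if k = 0 then M ⊗ₖ (1 : M4) else (1 : M4) ⊗ₖ M

/-- The coordinate direction `x_k^μ` in `ℝ⁸`. -/
def dir (k : Fin 2) (μ : Fin 4) : Pt :=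
  if k = 0 then (Pi.single μ 1, 0) else (0, Pi.single μ 1)

/-- Partial derivative `∂f/∂x_k^μ` on `ℝ⁸`. -/
def pdk {F : Type*} [NormedAddCommGroup F] [NormedSpace ℝ F]
    (k : Fin 2) (μ : Fin 4) (f : Pt → F) (X : Pt) : F :=
  fderiv ℝ f X (dir k μ)

/-- `V_1(x_1,x_2) = ((Σ_μ C_μ γ^μ) · exp(2i γ⁵ Σ_λ c_λ x^λ) − m_1 γ⁰) ⊗ I₄`,
with `x := x_2 − x_1`. -/
def VoneEx (D : DiracMatrices) (m₁ : ℝ) (C c : Fin 4 → ℝ) : Pt → M16 := fun X =>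
  ((∑ μ : Fin 4, (C μ : ℂ) • D.γ μ)
      * NormedSpace.exp
          ((2 * Complex.I * ((∑ l : Fin 4, c l * (X.2 l - X.1 l) : ℝ) : ℂ)) • D.γ5)
    - (m₁ : ℂ) • D.γ 0) ⊗ₖ (1 : M4)

/-- `V_2 = γ⁵ ⊗ (Σ_ν c_ν α^ν)`. -/
def VtwoEx (D : DiracMatrices) (c : Fin 4 → ℝ) : Pt → M16 := fun _ =>
  D.γ5 ⊗ₖ (∑ ν : Fin 4, (c ν : ℂ) • D.α ν)


namespace Stmt7

open NormedSpace

/-! ### Algebraic lemmas about Dirac matrices -/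

lemma Mink_self_mul (μ : Fin 4) : Mink μ μ * Mink μ μ = 1 := by
  simp only [Mink, if_pos rfl]; split_ifs <;> norm_num

lemma Mink_self_ne (μ : Fin 4) : Mink μ μ ≠ 0 := by
  simp only [Mink, if_pos rfl]; split_ifs <;> norm_num

lemma Mink_ne (μ ν : Fin 4) (h : μ ≠ ν) : Mink μ ν = 0 := by simp [Mink, h]

variable (D : DiracMatrices)

lemma gamma_sq (μ : Fin 4) : D.γ μ * D.γ μ = Mink μ μ • (1 : M4) := by
  have h := D.clifford μ μ
  have h2 : (2:ℂ) • (D.γ μ * D.γ μ) = (2:ℂ) • (Mink μ μ • (1:M4)) := by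
    rw [two_smul, h, smul_smul]
  exact smul_right_injective M4 two_ne_zero h2

lemma isUnit_of_mul_eq_one' (a b : M4) (h1 : a * b = 1) (h2 : b * a = 1) : IsUnit a :=
  ⟨⟨a, b, h1, h2⟩, rfl⟩

lemma isUnit_gamma (μ : Fin 4) : IsUnit (D.γ μ) := by
  refine isUnit_of_mul_eq_one' _ (Mink μ μ • D.γ μ) ?_ ?_
  · rw [mul_smul_comm, gamma_sq, smul_smul, Mink_self_mul, one_smul]
  · rw [smul_mul_assoc, gamma_sq, smul_smul, Mink_self_mul, one_smul]

lemma isUnit_smul {P : M4} (z : ℂ) (hz : z ≠ 0) (hP : IsUnit P) : IsUnit (z • P) := by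
  have h1 : z • P = (z • (1:M4)) * P := by rw [smul_mul_assoc, one_mul]
  have h2 : IsUnit (z • (1:M4)) := by
    refine isUnit_of_mul_eq_one' _ (z⁻¹ • 1) ?_ ?_
    · rw [smul_mul_assoc, one_mul, smul_smul, mul_inv_cancel₀ hz, one_smul]
    · rw [smul_mul_assoc, one_mul, smul_smul, inv_mul_cancel₀ hz, one_smul]
  rw [h1]; exact h2.mul hP

lemma isUnit_γ5 : IsUnit D.γ5 :=
  isUnit_smul Complex.I Complex.I_ne_zero
    (((((isUnit_gamma D 0).mul (isUnit_gamma D 1)).mul (isUnit_gamma D 2)).mul (isUnit_gamma D 3)))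

lemma trace_one4 : Matrix.trace (1 : M4) = 4 := by
  rw [Matrix.trace_one]; norm_num

lemma trace_gamma_mul (μ ν : Fin 4) : Matrix.trace (D.γ μ * D.γ ν) = 4 * Mink μ ν := by
  have h := congrArg Matrix.trace (D.clifford μ ν)
  rw [Matrix.trace_add, Matrix.trace_smul, Matrix.trace_mul_comm (D.γ ν) (D.γ μ), trace_one4] at h
  have h2 : (2:ℂ) * Matrix.trace (D.γ μ * D.γ ν) = 2 * (4 * Mink μ ν) := by
    rw [two_mul, h, smul_eq_mul]; ring
  exact mul_left_cancel₀ two_ne_zero h2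

lemma trace_alpha_mul (μ ν : Fin 4) :
    Matrix.trace (D.α μ * D.α ν) = if μ = ν then 4 else 0 := by
  have hswap : D.γ μ * D.γ 0 = (2 * Mink μ 0) • (1:M4) - D.γ 0 * D.γ μ := by
    rw [eq_sub_iff_add_eq]; exact D.clifford μ 0
  have h00 : D.γ 0 * D.γ 0 = 1 := by
    rw [gamma_sq]; simp [Mink]
  have key : D.α μ * D.α ν = (2 * Mink μ 0) • (D.γ 0 * D.γ ν) - D.γ μ * D.γ ν := by
    simp only [DiracMatrices.α]
    calc D.γ 0 * D.γ μ * (D.γ 0 * D.γ ν) = D.γ 0 * (D.γ μ * D.γ 0) * D.γ ν := by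
          noncomm_ring
      _ = (2 * Mink μ 0) • (D.γ 0 * D.γ ν) - D.γ μ * D.γ ν := by
          rw [hswap, mul_sub, sub_mul, mul_smul_comm, mul_one, smul_mul_assoc,
            ← mul_assoc (D.γ 0) (D.γ 0), h00, one_mul]
  rw [key, Matrix.trace_sub, Matrix.trace_smul, trace_gamma_mul, trace_gamma_mul, smul_eq_mul]
  by_cases hμν : μ = ν
  · subst hμν
    by_cases h0 : μ = 0
    · subst h0; simp [Mink]; norm_num
    · simp [Mink, h0]
  · by_cases h0 : μ = 0
    · subst h0
      have : ν ≠ 0 := fun h => hμν h.symm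
      simp [Mink, hμν, this]
    · simp [Mink, hμν, h0]

lemma sumA_ne_zero (C : Fin 4 → ℝ) (ν₀ : Fin 4) (h : C ν₀ ≠ 0) :
    (∑ μ : Fin 4, (C μ : ℂ) • D.γ μ) ≠ 0 := by
  intro h0
  have h1 := congrArg (fun P => Matrix.trace (P * D.γ ν₀)) h0
  simp only [zero_mul, Matrix.trace_zero, Finset.sum_mul, smul_mul_assoc, Matrix.trace_sum,
    Matrix.trace_smul, trace_gamma_mul, smul_eq_mul] at h1
  rw [Finset.sum_eq_single ν₀ (fun μ _ hμ => by rw [Mink_ne μ ν₀ hμ]; ring)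
    (fun h => absurd (Finset.mem_univ ν₀) h)] at h1
  have h4 : (C ν₀ : ℂ) = 0 := by
    rcases mul_eq_zero.mp h1 with h' | h'
    · exact h'
    · rcases mul_eq_zero.mp h' with h'' | h''
      · norm_num at h''
      · exact absurd h'' (Mink_self_ne ν₀)
  exact h (by exact_mod_cast h4)

lemma sumB_ne_zero (c : Fin 4 → ℝ) (ν₁ : Fin 4) (h : c ν₁ ≠ 0) :
    (∑ ν : Fin 4, (c ν : ℂ) • D.α ν) ≠ 0 := by
  intro h0
  have h1 := congrArg (fun P => Matrix.trace (P * D.α ν₁)) h0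
  simp only [zero_mul, Matrix.trace_zero, Finset.sum_mul, smul_mul_assoc, Matrix.trace_sum,
    Matrix.trace_smul, trace_alpha_mul, smul_eq_mul] at h1
  rw [Finset.sum_eq_single ν₁ (fun μ _ hμ => by rw [if_neg hμ]; ring)
    (fun h => absurd (Finset.mem_univ ν₁) h)] at h1
  rw [if_pos rfl] at h1
  have h4 : (c ν₁ : ℂ) = 0 := by
    rcases mul_eq_zero.mp h1 with h' | h'
    · exact h'
    · norm_num at h'
  exact h (by exact_mod_cast h4)

lemma matrix_ne_zero_iff {m n : Type*} (P : Matrix m n ℂ) (hP : P ≠ 0) :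
    ∃ i k, P i k ≠ 0 := by
  by_contra h
  push_neg at h
  exact hP (by ext i k; simpa using h i k)

lemma kron_ne_zero (P Q : M4) (hP : P ≠ 0) (hQ : Q ≠ 0) : P ⊗ₖ Q ≠ 0 := by
  obtain ⟨i, k, hik⟩ := matrix_ne_zero_iff P hP
  obtain ⟨j, l, hjl⟩ := matrix_ne_zero_iff Q hQ
  intro h0
  have h1 := congrArg (fun M => M (i, j) (k, l)) h0
  simp only [Matrix.kroneckerMap_apply, Matrix.zero_apply] at h1
  exact mul_ne_zero hik hjl h1

/-! ### Kronecker product and embedding lemmas -/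

lemma emb_zero (P : M4) : emb 0 P = P ⊗ₖ (1 : M4) := rfl

lemma emb_one (P : M4) : emb 1 P = (1 : M4) ⊗ₖ P := rfl

lemma emb_comm (P Q : M4) : emb 0 P * emb 1 Q = emb 1 Q * emb 0 P := by
  rw [emb_zero, emb_one, ← Matrix.mul_kronecker_mul, ← Matrix.mul_kronecker_mul,
    one_mul, mul_one, one_mul, mul_one]

lemma sub_kron (P Q : M4) : (P - Q) ⊗ₖ (1 : M4) = P ⊗ₖ (1:M4) - Q ⊗ₖ (1:M4) := by
  ext ⟨i, j⟩ ⟨k, l⟩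
  simp [Matrix.kroneckerMap_apply, Matrix.sub_apply, sub_mul]

lemma sum_emb1_kron (c : Fin 4 → ℝ) (P : M4) :
    ∑ ν : Fin 4, emb 1 (D.α ν) * ((c ν • P) ⊗ₖ (1:M4))
      = P ⊗ₖ (∑ ν : Fin 4, (c ν : ℂ) • D.α ν) := by
  have step : ∀ ν : Fin 4, emb 1 (D.α ν) * ((c ν • P) ⊗ₖ (1:M4)) = c ν • (P ⊗ₖ D.α ν) := by
    intro ν
    rw [emb_one, ← Matrix.mul_kronecker_mul, one_mul, mul_one, Matrix.smul_kronecker]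
  simp_rw [step]
  ext ⟨i, j⟩ ⟨k, l⟩
  simp only [Matrix.sum_apply, Matrix.smul_apply, Matrix.kroneckerMap_apply,
    Complex.real_smul, smul_eq_mul, Finset.mul_sum]
  refine Finset.sum_congr rfl fun ν _ => ?_
  ring

/-! ### The matrix exponential derivative (via the `l∞` operator norm) -/

def M4Alt : Type := Matrix (Fin 4) (Fin 4) ℂ

instance : NormedRing M4Alt := Matrix.linftyOpNormedRing
instance : NormedAlgebra ℂ M4Alt := Matrix.linftyOpNormedAlgebra
instance : FiniteDimensional ℂ M4Alt :=
  inferInstanceAs (FiniteDimensional ℂ (Matrix (Fin 4) (Fin 4) ℂ))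
instance : CompleteSpace M4Alt := FiniteDimensional.complete ℂ M4Alt

def idCLM : M4Alt →L[ℂ] M4 :=
  LinearMap.toContinuousLinearMap
    { toFun := fun x => (x : Matrix (Fin 4) (Fin 4) ℂ),
      map_add' := fun _ _ => rfl, map_smul' := fun _ _ => rfl }

set_option maxHeartbeats 1000000 in
lemma exp_deriv (E : M4) (t : ℂ) :
    HasDerivAt (fun u : ℂ => exp (u • E)) (exp (t • E) * E) t := by
  have h := hasDerivAt_exp_smul_const (𝕂 := ℂ) (show M4Alt from E) t
  have h2 := (idCLM.hasFDerivAt).comp_hasDerivAt t h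
  exact h2

/-! ### Continuous linear maps used for differentiation -/

def mulCLM (K : M16) : M16 →L[ℝ] M16 :=
  LinearMap.toContinuousLinearMap
    { toFun := fun P => K * P
      map_add' := fun P Q => mul_add K P Q
      map_smul' := fun r P => mul_smul_comm r K P }

lemma mulCLM_apply (K P : M16) : mulCLM K P = K * P := rfl

def kron1CLM (A : M4) : M4 →L[ℝ] M16 :=
  LinearMap.toContinuousLinearMap
    { toFun := fun P => (A * P) ⊗ₖ (1 : M4)
      map_add' := fun P Q => by
        show (A * (P + Q)) ⊗ₖ (1:M4) = (A * P) ⊗ₖ (1:M4) + (A * Q) ⊗ₖ (1:M4)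
        rw [mul_add, Matrix.add_kronecker]
      map_smul' := fun r P => by
        show (A * (r • P)) ⊗ₖ (1:M4) = r • ((A * P) ⊗ₖ (1:M4))
        rw [mul_smul_comm, Matrix.smul_kronecker] }

lemma kron1CLM_apply (A P : M4) : kron1CLM A P = (A * P) ⊗ₖ (1 : M4) := rfl

def rCLM (c : Fin 4 → ℝ) : Pt →L[ℝ] ℝ :=
  LinearMap.toContinuousLinearMap
    { toFun := fun X : Pt => ∑ l : Fin 4, c l * (X.2 l - X.1 l)
      map_add' := fun X Y => by
        simp only [Prod.fst_add, Prod.snd_add, Pi.add_apply]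
        rw [← Finset.sum_add_distrib]
        exact Finset.sum_congr rfl fun l _ => by ring
      map_smul' := fun r X => by
        simp only [Prod.smul_fst, Prod.smul_snd, Pi.smul_apply, smul_eq_mul, RingHom.id_apply]
        rw [Finset.mul_sum]
        exact Finset.sum_congr rfl fun l _ => by ring }

lemma rCLM_apply (c : Fin 4 → ℝ) (X : Pt) :
    rCLM c X = ∑ l : Fin 4, c l * (X.2 l - X.1 l) := rfl

lemma dir_zero (μ : Fin 4) : dir 0 μ = (Pi.single μ 1, 0) := rfl

lemma dir_one (ν : Fin 4) : dir 1 ν = (0, Pi.single ν 1) := rfl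

lemma rCLM_dir_one (c : Fin 4 → ℝ) (ν : Fin 4) : rCLM c (dir 1 ν) = c ν := by
  rw [rCLM_apply, dir_one]
  simp [Pi.single_apply]

/-! ### Constancy implies vanishing directional derivative -/

lemma fderiv_dir1_eq_zero {F : Type*} [NormedAddCommGroup F] [NormedSpace ℝ F]
    {g : Pt → F} {Dg : Pt → Pt →L[ℝ] F} (hd : ∀ Y, HasFDerivAt g (Dg Y) Y)
    (hc : ∀ x₁ x₂ x₂', g (x₁, x₂) = g (x₁, x₂')) (X : Pt) (ν : Fin 4) :
    Dg X (dir 1 ν) = 0 := by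
  have hin : HasFDerivAt (fun y : Fin 4 → ℝ => ((y, X.2) : Pt))
      ((ContinuousLinearMap.id ℝ (Fin 4 → ℝ)).prod 0) X.1 :=
    (hasFDerivAt_id X.1).prodMk (hasFDerivAt_const X.2 X.1)
  have hgo : HasFDerivAt (fun y : Fin 4 → ℝ => g (y, X.2))
      ((Dg X).comp ((ContinuousLinearMap.id ℝ (Fin 4 → ℝ)).prod 0)) X.1 :=
    (hd X).comp X.1 hin
  have hgeq : g = (fun y : Fin 4 → ℝ => g (y, X.2)) ∘ Prod.fst :=
    funext fun Y => hc Y.1 Y.2 X.2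
  have h2 : HasFDerivAt g
      (((Dg X).comp ((ContinuousLinearMap.id ℝ (Fin 4 → ℝ)).prod 0)).comp
        (ContinuousLinearMap.fst ℝ (Fin 4 → ℝ) (Fin 4 → ℝ))) X := by
    rw [hgeq]
    exact hgo.comp X (ContinuousLinearMap.fst ℝ (Fin 4 → ℝ) (Fin 4 → ℝ)).hasFDerivAt
  have h3 := (hd X).unique h2
  rw [h3]
  rw [dir_one]
  simp
  exact map_zero (Dg X)

lemma fderiv_dir0_eq_zero {F : Type*} [NormedAddCommGroup F] [NormedSpace ℝ F]
    {g : Pt → F} {Dg : Pt → Pt →L[ℝ] F} (hd : ∀ Y, HasFDerivAt g (Dg Y) Y)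
    (hc : ∀ x₁ x₁' x₂, g (x₁, x₂) = g (x₁', x₂)) (X : Pt) (μ : Fin 4) :
    Dg X (dir 0 μ) = 0 := by
  have hin : HasFDerivAt (fun y : Fin 4 → ℝ => ((X.1, y) : Pt))
      ((0 : (Fin 4 → ℝ) →L[ℝ] (Fin 4 → ℝ)).prod (ContinuousLinearMap.id ℝ (Fin 4 → ℝ))) X.2 :=
    (hasFDerivAt_const X.1 X.2).prodMk (hasFDerivAt_id X.2)
  have hgo : HasFDerivAt (fun y : Fin 4 → ℝ => g (X.1, y))
      ((Dg X).comp ((0 : (Fin 4 → ℝ) →L[ℝ] (Fin 4 → ℝ)).prod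
        (ContinuousLinearMap.id ℝ (Fin 4 → ℝ)))) X.2 :=
    (hd X).comp X.2 hin
  have hgeq : g = (fun y : Fin 4 → ℝ => g (X.1, y)) ∘ Prod.snd :=
    funext fun Y => hc Y.1 X.1 Y.2
  have h2 : HasFDerivAt g
      (((Dg X).comp ((0 : (Fin 4 → ℝ) →L[ℝ] (Fin 4 → ℝ)).prod
        (ContinuousLinearMap.id ℝ (Fin 4 → ℝ)))).comp
        (ContinuousLinearMap.snd ℝ (Fin 4 → ℝ) (Fin 4 → ℝ))) X := by
    rw [hgeq]
    exact hgo.comp X (ContinuousLinearMap.snd ℝ (Fin 4 → ℝ) (Fin 4 → ℝ)).hasFDerivAt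
  have h3 := (hd X).unique h2
  rw [h3]
  rw [dir_zero]
  simp
  exact map_zero (Dg X)

/-! ### Derivatives of the potential-difference combinations -/

lemma hasFDerivAt_combo (M : Pt → M16) (hd : Differentiable ℝ (fderiv ℝ M))
    (k : Fin 2) (Ks : Fin 4 → M16) (Y : Pt) :
    HasFDerivAt (fun Z => ∑ i : Fin 4, Ks i * pdk k i M Z)
      (∑ i : Fin 4, (mulCLM (Ks i)).comp
        ((ContinuousLinearMap.apply ℝ M16 (dir k i)).comp (fderiv ℝ (fderiv ℝ M) Y))) Y := by
  apply HasFDerivAt.fun_sum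
  intro i _
  have h1 : HasFDerivAt (fderiv ℝ M) (fderiv ℝ (fderiv ℝ M) Y) Y := (hd Y).hasFDerivAt
  have h2 := (ContinuousLinearMap.apply ℝ M16 (dir k i)).hasFDerivAt.comp Y h1
  exact (mulCLM (Ks i)).hasFDerivAt.comp Y h2

end Stmt7

open Stmt7 NormedSpace

theorem explicit_example_is_interacting
    (D : DiracMatrices) (m₁ : ℝ) (hm₁ : 0 ≤ m₁)
    (C c : Fin 4 → ℝ) (hC : ∃ ν, C ν ≠ 0) (hc : ∃ ν, c ν ≠ 0) :
    ¬ ∃ M : Pt → M16, ContDiff ℝ 2 M ∧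
      (∀ x₁ x₂ x₂' : Fin 4 → ℝ,
        VoneEx D m₁ C c (x₁, x₂) - ∑ μ : Fin 4, emb 0 (D.α μ) * pdk 0 μ M (x₁, x₂)
          = VoneEx D m₁ C c (x₁, x₂') - ∑ μ : Fin 4, emb 0 (D.α μ) * pdk 0 μ M (x₁, x₂')) ∧
      (∀ x₁ x₁' x₂ : Fin 4 → ℝ,
        VtwoEx D c (x₁, x₂) - ∑ ν : Fin 4, emb 1 (D.α ν) * pdk 1 ν M (x₁, x₂)
          = VtwoEx D c (x₁', x₂) - ∑ ν : Fin 4, emb 1 (D.α ν) * pdk 1 ν M (x₁', x₂)) := by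
  rintro ⟨M, hM, h1, h2⟩
  obtain ⟨ν₀, hν₀⟩ := hC
  obtain ⟨ν₁, hν₁⟩ := hc
  have hdM : Differentiable ℝ M := hM.differentiable (by norm_num)
  have hdf' : Differentiable ℝ (fderiv ℝ M) :=
    (hM.fderiv_right (m := 1) (by norm_num)).differentiable (by norm_num)
  set X : Pt := (0, 0) with hXdef
  set A : M4 := ∑ μ : Fin 4, (C μ : ℂ) • D.γ μ with hAdef
  set E : M4 := (2 * Complex.I) • D.γ5 with hEdef
  set Φ : ℝ → M4 := fun t => NormedSpace.exp ((t : ℂ) • E) with hΦdef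
  -- rewrite V₁ in a differentiable form
  have hsc : ∀ s : ℝ, (2 * Complex.I * (s : ℂ)) • D.γ5 = ((s : ℂ)) • E := by
    intro s
    rw [hEdef, smul_smul]
    congr 1
    ring
  have hV1eq : VoneEx D m₁ C c
      = fun Y => kron1CLM A (Φ (rCLM c Y)) + -(((m₁:ℂ) • D.γ 0) ⊗ₖ (1 : M4)) := by
    funext Y
    show ((A * NormedSpace.exp ((2 * Complex.I *
        ((∑ l : Fin 4, c l * (Y.2 l - Y.1 l) : ℝ) : ℂ)) • D.γ5)
        - (m₁:ℂ) • D.γ 0) ⊗ₖ (1:M4)) = _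
    rw [hsc, sub_kron, sub_eq_add_neg, kron1CLM_apply]
    rfl
  have hΦd : ∀ t : ℝ, HasDerivAt Φ (Φ t * E) t := by
    intro t
    have hx := exp_deriv E (t : ℂ)
    have hor : HasDerivAt (fun s : ℝ => (s : ℂ)) 1 t := by
      exact Complex.ofRealCLM.hasDerivAt (x := t)
    have h3 := HasDerivAt.scomp (𝕜 := ℝ) (𝕜' := ℂ) (x := t) hx hor
    rw [hΦdef]
    simp only [Function.comp_def, one_smul] at h3
    exact h3
  have hDV1 : ∀ Y : Pt, HasFDerivAt (VoneEx D m₁ C c)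
      ((kron1CLM A).comp (((1 : ℝ →L[ℝ] ℝ).smulRight (Φ (rCLM c Y) * E)).comp (rCLM c))) Y := by
    intro Y
    rw [hV1eq]
    apply HasFDerivAt.add_const
    have hr : HasFDerivAt (fun Z : Pt => rCLM c Z) (rCLM c) Y := (rCLM c).hasFDerivAt
    have hcomp := ((hΦd (rCLM c Y)).hasFDerivAt).comp Y hr
    exact (kron1CLM A).hasFDerivAt.comp Y hcomp
  -- the mixed second derivatives
  have hgd : ∀ Y : Pt, HasFDerivAt
      (fun Z : Pt => VoneEx D m₁ C c Z - ∑ μ : Fin 4, emb 0 (D.α μ) * pdk 0 μ M Z)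
      (((kron1CLM A).comp (((1 : ℝ →L[ℝ] ℝ).smulRight (Φ (rCLM c Y) * E)).comp (rCLM c)))
        - (∑ μ : Fin 4, (mulCLM (emb 0 (D.α μ))).comp
            ((ContinuousLinearMap.apply ℝ M16 (dir 0 μ)).comp (fderiv ℝ (fderiv ℝ M) Y)))) Y :=
    fun Y => (hDV1 Y).sub (hasFDerivAt_combo M hdf' 0 (fun μ => emb 0 (D.α μ)) Y)
  have hsubap : ∀ {F : Type} [NormedAddCommGroup F] [NormedSpace ℝ F] (f g : Pt →L[ℝ] F) (v : Pt),
      (f - g) v = f v - g v := fun f g v => rfl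
  have hsumap : ∀ {F : Type} [NormedAddCommGroup F] [NormedSpace ℝ F] (s : Fin 4 → Pt →L[ℝ] F)
      (v : Pt), (∑ i, s i) v = ∑ i, s i v :=
    fun s v => by simp only [Fin.sum_univ_four]; rfl
  have key1 : ∀ ν : Fin 4, (c ν • (A * (Φ (rCLM c X) * E))) ⊗ₖ (1:M4)
      = ∑ μ : Fin 4, emb 0 (D.α μ) * (fderiv ℝ (fderiv ℝ M) X (dir 1 ν) (dir 0 μ)) := by
    intro ν
    have hz := fderiv_dir1_eq_zero hgd (fun x₁ x₂ x₂' => h1 x₁ x₂ x₂') X ν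
    erw [hsubap, sub_eq_zero] at hz
    have lhs : ((kron1CLM A).comp
          (((1 : ℝ →L[ℝ] ℝ).smulRight (Φ (rCLM c X) * E)).comp (rCLM c))) (dir 1 ν)
        = (c ν • (A * (Φ (rCLM c X) * E))) ⊗ₖ (1:M4) := by
      simp only [ContinuousLinearMap.coe_comp', Function.comp_apply,
        ContinuousLinearMap.smulRight_apply, ContinuousLinearMap.one_apply, rCLM_dir_one,
        kron1CLM_apply, mul_smul_comm]
    have rhs : (∑ μ : Fin 4, (mulCLM (emb 0 (D.α μ))).comp
          ((ContinuousLinearMap.apply ℝ M16 (dir 0 μ)).comp (fderiv ℝ (fderiv ℝ M) X))) (dir 1 ν)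
        = ∑ μ : Fin 4, emb 0 (D.α μ) * (fderiv ℝ (fderiv ℝ M) X (dir 1 ν) (dir 0 μ)) := by
      simp only [ContinuousLinearMap.sum_apply, ContinuousLinearMap.coe_comp',
        Function.comp_apply, ContinuousLinearMap.apply_apply, mulCLM_apply, hsumap]
      exact Finset.sum_congr rfl fun _ _ => rfl
    rw [← lhs, ← rhs]
    exact hz
  have hKd : ∀ Y : Pt, HasFDerivAt
      (fun Z : Pt => ∑ ν : Fin 4, emb 1 (D.α ν) * pdk 1 ν M Z)
      (∑ ν : Fin 4, (mulCLM (emb 1 (D.α ν))).comp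
        ((ContinuousLinearMap.apply ℝ M16 (dir 1 ν)).comp (fderiv ℝ (fderiv ℝ M) Y))) Y :=
    fun Y => hasFDerivAt_combo M hdf' 1 (fun ν => emb 1 (D.α ν)) Y
  have hKconst : ∀ x₁ x₁' x₂ : Fin 4 → ℝ,
      (∑ ν : Fin 4, emb 1 (D.α ν) * pdk 1 ν M (x₁, x₂))
        = ∑ ν : Fin 4, emb 1 (D.α ν) * pdk 1 ν M (x₁', x₂) := by
    intro x₁ x₁' x₂
    have h' := h2 x₁ x₁' x₂
    have e1 : VtwoEx D c (x₁', x₂) = VtwoEx D c (x₁, x₂) := rfl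
    rw [e1] at h'
    have e2 := sub_sub_cancel (VtwoEx D c (x₁, x₂))
      (∑ ν : Fin 4, emb 1 (D.α ν) * pdk 1 ν M (x₁, x₂))
    rw [← e2, h', sub_sub_cancel]
  have key2 : ∀ μ : Fin 4,
      ∑ ν : Fin 4, emb 1 (D.α ν) * (fderiv ℝ (fderiv ℝ M) X (dir 0 μ) (dir 1 ν)) = 0 := by
    intro μ
    have hz := fderiv_dir0_eq_zero hKd hKconst X μ
    erw [hsumap] at hz
    exact hz
  have hsymm : ∀ v w : Pt, fderiv ℝ (fderiv ℝ M) X v w = fderiv ℝ (fderiv ℝ M) X w v :=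
    fun v w => second_derivative_symmetric (fun y => (hdM y).hasFDerivAt)
      ((hdf' X).hasFDerivAt) v w
  set P : M4 := A * (Φ (rCLM c X) * E) with hPdef
  have hzero : P ⊗ₖ (∑ ν : Fin 4, (c ν : ℂ) • D.α ν) = 0 := by
    rw [← sum_emb1_kron D c P]
    calc ∑ ν : Fin 4, emb 1 (D.α ν) * ((c ν • P) ⊗ₖ (1:M4))
        = ∑ ν : Fin 4, emb 1 (D.α ν) * (∑ μ : Fin 4, emb 0 (D.α μ) *
            (fderiv ℝ (fderiv ℝ M) X (dir 1 ν) (dir 0 μ))) :=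
          Finset.sum_congr rfl fun ν _ => by rw [key1 ν]
      _ = ∑ μ : Fin 4, emb 0 (D.α μ) * (∑ ν : Fin 4, emb 1 (D.α ν) *
            (fderiv ℝ (fderiv ℝ M) X (dir 0 μ) (dir 1 ν))) := by
          simp_rw [Finset.mul_sum]
          rw [Finset.sum_comm]
          refine Finset.sum_congr rfl fun μ _ => Finset.sum_congr rfl fun ν _ => ?_
          rw [← mul_assoc, ← emb_comm, mul_assoc, hsymm (dir 1 ν) (dir 0 μ)]
      _ = 0 := Finset.sum_eq_zero fun μ _ => by rw [key2 μ, mul_zero]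
  have hPne : P ≠ 0 := by
    intro h0
    have hUΦ : IsUnit (Φ (rCLM c X)) := Matrix.isUnit_exp _
    have hUE : IsUnit E := by
      rw [hEdef]
      exact isUnit_smul _ (mul_ne_zero two_ne_zero Complex.I_ne_zero) (isUnit_γ5 D)
    obtain ⟨u, hu⟩ := hUΦ.mul hUE
    have hA0 : A = 0 := by
      calc A = A * (↑u * ↑u⁻¹) := by rw [Units.mul_inv, mul_one]
        _ = P * ↑u⁻¹ := by rw [← mul_assoc, hu, ← hPdef]
        _ = 0 := by rw [h0, zero_mul]
    exact sumA_ne_zero D C ν₀ hν₀ hA0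
  exact kron_ne_zero P _ hPne (sumB_ne_zero D c ν₁ hν₁) hzero
end
end

section
/- Let Y_0,…,Y_3 and Z_0,…,Z_3 be real constants, m_1 ≥ 0, and fix μ ∈ {0,1,2,3}. Let A, B, C, D : ℝ⁴ → ℂ be continuously differentiable functions satisfying for all ν = 0,…,3 on ℝ⁴: (i/2) ∂_ν A = B Y_ν + D Z_ν; (i/2) ∂_ν B = (m_1 δ_{0μ} + A) Y_ν + C Z_ν; (i/2) ∂_ν C = −B Z_ν − D Y_ν; (i/2) ∂_ν D = −(m_1 δ_{0μ} + A) Z_ν − C Y_ν (here ∂_ν is the partial derivative in the ν-th coordinate of ℝ⁴ and δ_{0μ} is the Kronecker delta). Then B and D are twice continuously differentiable and satisfy, for all ν, λ = 0,…,3: (1/4) ∂_ν ∂_λ B = (Z_λ Z_ν − Y_λ Y_ν) B + (Y_ν Z_λ − Y_λ Z_ν) D and (1/4) ∂_ν ∂_λ D = (Z_λ Z_ν − Y_λ Y_ν) D + (Y_ν Z_λ − Y_λ Z_ν) B. -/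
/-!
STATEMENT 10: From the first-order system
`(i/2)∂_ν A = B Y_ν + D Z_ν`, `(i/2)∂_ν B = (m₁δ_{0μ} + A) Y_ν + C Z_ν`,
`(i/2)∂_ν C = −B Z_ν − D Y_ν`, `(i/2)∂_ν D = −(m₁δ_{0μ} + A) Z_ν − C Y_ν`
(with constant `Y_ν, Z_ν`), the functions `B` and `D` are C² and satisfy the
second-order equations
`(1/4)∂_ν∂_λ B = (Z_λZ_ν − Y_λY_ν) B + (Y_νZ_λ − Y_λZ_ν) D` and
`(1/4)∂_ν∂_λ D = (Z_λZ_ν − Y_λY_ν) D + (Y_νZ_λ − Y_λZ_ν) B`.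
-/

noncomputable section

/-- Partial derivative `∂_ν` on ℝ⁴ for ℂ-valued functions. -/
def pd4 (ν : Fin 4) (f : (Fin 4 → ℝ) → ℂ) (x : Fin 4 → ℝ) : ℂ :=
  fderiv ℝ f x (Pi.single ν 1)

/-- Solve `(i/2) p = r` for `p`. -/
lemma solve_half_I (p r : ℂ) (h : Complex.I / 2 * p = r) : p = -2 * Complex.I * r := by
  linear_combination (-2 * Complex.I) * h + p * Complex.I_sq

/-- Derivative of a linear combination plus a constant. -/
lemma pd4_comb (ν : Fin 4) (f g : (Fin 4 → ℝ) → ℂ) (a b c : ℂ) (x : Fin 4 → ℝ)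
    (hf : DifferentiableAt ℝ f x) (hg : DifferentiableAt ℝ g x) :
    pd4 ν (fun y => a * f y + b * g y + c) x = a * pd4 ν f x + b * pd4 ν g x := by
  unfold pd4
  have h1 : HasFDerivAt (fun y => a * f y + b * g y + c)
      (a • fderiv ℝ f x + b • fderiv ℝ g x) x := by
    exact (((hf.hasFDerivAt.const_mul a).add (hg.hasFDerivAt.const_mul b)).add_const c)
  rw [h1.fderiv]
  simp [smul_eq_mul]

/-- If all partials of a `C¹` function agree with `C¹` functions, it is `C²`. -/
lemma c2_of_partials (f : (Fin 4 → ℝ) → ℂ) (hf : ContDiff ℝ 1 f)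
    (g : Fin 4 → ((Fin 4 → ℝ) → ℂ)) (hg : ∀ i, ContDiff ℝ 1 (g i))
    (h : ∀ i x, pd4 i f x = g i x) : ContDiff ℝ 2 f := by
  have h2 : (2 : WithTop ℕ∞) = 1 + 1 := by norm_num
  rw [h2, contDiff_succ_iff_fderiv_apply]
  refine ⟨hf.differentiable one_ne_zero, by simp, fun y => ?_⟩
  have key : (fun x => fderiv ℝ f x y) = fun x => ∑ i, y i • g i x := by
    funext x
    have hy : y = ∑ i, y i • (Pi.single i 1 : Fin 4 → ℝ) := by
      funext j
      simp [Pi.single_apply, Finset.sum_apply, mul_ite]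
    conv_lhs => rw [hy]
    rw [map_sum]
    simp only [map_smul]
    congr 1
    funext i
    rw [show fderiv ℝ f x (Pi.single i 1) = pd4 i f x from rfl, h i x]
  rw [key]
  exact ContDiff.sum fun i _ => (hg i).const_smul (y i)

theorem second_order_equations_for_B_D
    (Y Z : Fin 4 → ℝ) (m₁ : ℝ) (hm₁ : 0 ≤ m₁) (μ : Fin 4)
    (A B C D : (Fin 4 → ℝ) → ℂ)
    (hA : ContDiff ℝ 1 A) (hB : ContDiff ℝ 1 B)
    (hC : ContDiff ℝ 1 C) (hD : ContDiff ℝ 1 D)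
    (eqA : ∀ ν : Fin 4, ∀ x, (Complex.I / 2) * pd4 ν A x = B x * (Y ν : ℂ) + D x * (Z ν : ℂ))
    (eqB : ∀ ν : Fin 4, ∀ x, (Complex.I / 2) * pd4 ν B x
      = ((m₁ : ℂ) * (if μ = 0 then 1 else 0) + A x) * (Y ν : ℂ) + C x * (Z ν : ℂ))
    (eqC : ∀ ν : Fin 4, ∀ x, (Complex.I / 2) * pd4 ν C x
      = -(B x * (Z ν : ℂ)) - D x * (Y ν : ℂ))
    (eqD : ∀ ν : Fin 4, ∀ x, (Complex.I / 2) * pd4 ν D x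
      = -(((m₁ : ℂ) * (if μ = 0 then 1 else 0) + A x) * (Z ν : ℂ)) - C x * (Y ν : ℂ)) :
    ContDiff ℝ 2 B ∧ ContDiff ℝ 2 D ∧
    (∀ ν lam : Fin 4, ∀ x,
      (1 / 4 : ℂ) * pd4 ν (pd4 lam B) x
        = ((Z lam * Z ν - Y lam * Y ν : ℝ) : ℂ) * B x
          + ((Y ν * Z lam - Y lam * Z ν : ℝ) : ℂ) * D x) ∧
    (∀ ν lam : Fin 4, ∀ x,
      (1 / 4 : ℂ) * pd4 ν (pd4 lam D) x
        = ((Z lam * Z ν - Y lam * Y ν : ℝ) : ℂ) * D x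
          + ((Y ν * Z lam - Y lam * Z ν : ℝ) : ℂ) * B x) := by
  set M : ℂ := (m₁ : ℂ) * (if μ = 0 then 1 else 0) with hM
  have hA' : ∀ ν x, pd4 ν A x = -2 * Complex.I * (B x * (Y ν : ℂ) + D x * (Z ν : ℂ)) :=
    fun ν x => solve_half_I _ _ (eqA ν x)
  have hC' : ∀ ν x, pd4 ν C x = -2 * Complex.I * (-(B x * (Z ν : ℂ)) - D x * (Y ν : ℂ)) :=
    fun ν x => solve_half_I _ _ (eqC ν x)
  have hBfun : ∀ lam : Fin 4, pd4 lam B = fun x =>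
      (-2 * Complex.I * (Y lam : ℂ)) * A x + (-2 * Complex.I * (Z lam : ℂ)) * C x
        + (-2 * Complex.I * M * (Y lam : ℂ)) := by
    intro lam
    funext x
    have := solve_half_I _ _ (eqB lam x)
    rw [this]; ring
  have hDfun : ∀ lam : Fin 4, pd4 lam D = fun x =>
      (2 * Complex.I * (Z lam : ℂ)) * A x + (2 * Complex.I * (Y lam : ℂ)) * C x
        + (2 * Complex.I * M * (Z lam : ℂ)) := by
    intro lam
    funext x
    have := solve_half_I _ _ (eqD lam x)
    rw [this]; ring
  have hAd : Differentiable ℝ A := hA.differentiable one_ne_zero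
  have hCd : Differentiable ℝ C := hC.differentiable one_ne_zero
  refine ⟨?_, ?_, ?_, ?_⟩
  · refine c2_of_partials B hB (fun i x =>
      (-2 * Complex.I * (Y i : ℂ)) * A x + (-2 * Complex.I * (Z i : ℂ)) * C x
        + (-2 * Complex.I * M * (Y i : ℂ))) (fun i => ?_) (fun i x => by rw [hBfun i])
    exact (((contDiff_const.mul hA).add (contDiff_const.mul hC)).add contDiff_const)
  · refine c2_of_partials D hD (fun i x =>
      (2 * Complex.I * (Z i : ℂ)) * A x + (2 * Complex.I * (Y i : ℂ)) * C x
        + (2 * Complex.I * M * (Z i : ℂ))) (fun i => ?_) (fun i x => by rw [hDfun i])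
    exact (((contDiff_const.mul hA).add (contDiff_const.mul hC)).add contDiff_const)
  · intro ν lam x
    rw [hBfun lam, pd4_comb ν A C _ _ _ x (hAd x) (hCd x), hA', hC']
    push_cast
    linear_combination ((Y lam : ℂ) * (Y ν : ℂ) * B x + (Y lam : ℂ) * (Z ν : ℂ) * D x
      - (Z lam : ℂ) * (Z ν : ℂ) * B x - (Z lam : ℂ) * (Y ν : ℂ) * D x) * Complex.I_sq
  · intro ν lam x
    rw [hDfun lam, pd4_comb ν A C _ _ _ x (hAd x) (hCd x), hA', hC']
    push_cast
    linear_combination (-((Z lam : ℂ) * (Y ν : ℂ) * B x + (Z lam : ℂ) * (Z ν : ℂ) * D x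
      - (Y lam : ℂ) * (Z ν : ℂ) * B x - (Y lam : ℂ) * (Y ν : ℂ) * D x)) * Complex.I_sq
end
end

section
/- Let Y_0,…,Y_3 and Z_0,…,Z_3 be real constants and let B, D : ℝ⁴ → ℂ be twice continuously differentiable functions satisfying, for all ν, λ = 0,…,3 on ℝ⁴: (1/4) ∂_ν ∂_λ B = (Z_λ Z_ν − Y_λ Y_ν) B + (Y_ν Z_λ − Y_λ Z_ν) D and (1/4) ∂_ν ∂_λ D = (Z_λ Z_ν − Y_λ Y_ν) D + (Y_ν Z_λ − Y_λ Z_ν) B. Then either Y_ν Z_λ = Y_λ Z_ν for all ν, λ, or B and D are both identically zero on ℝ⁴. -/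
/-!
STATEMENT 11: If C² functions `B, D : ℝ⁴ → ℂ` satisfy
`(1/4)∂_ν∂_λ B = (Z_λZ_ν − Y_λY_ν) B + (Y_νZ_λ − Y_λZ_ν) D` and
`(1/4)∂_ν∂_λ D = (Z_λZ_ν − Y_λY_ν) D + (Y_νZ_λ − Y_λZ_ν) B`
for constants `Y_ν, Z_ν`, then either `Y_ν Z_λ = Y_λ Z_ν` for all `ν, λ`,
or `B` and `D` vanish identically.
-/

noncomputable section

/-- For C² functions, mixed partial derivatives commute (Schwarz). -/
lemma pd4_comm (f : (Fin 4 → ℝ) → ℂ) (hf : ContDiff ℝ 2 f) (ν lam : Fin 4)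
    (x : Fin 4 → ℝ) : pd4 ν (pd4 lam f) x = pd4 lam (pd4 ν f) x := by
  have hdf : ContDiff ℝ 1 (fderiv ℝ f) := by
    apply hf.fderiv_right
    norm_num
  have hdfx : DifferentiableAt ℝ (fderiv ℝ f) x := hdf.differentiable one_ne_zero x
  have key : ∀ v w : Fin 4 → ℝ,
      fderiv ℝ (fun y => fderiv ℝ f y v) x w = fderiv ℝ (fderiv ℝ f) x w v := by
    intro v w
    have : fderiv ℝ (fun y => fderiv ℝ f y v) x
        = ((fderiv ℝ f x).comp (fderiv ℝ (fun _ => v) x))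
          + (fderiv ℝ (fderiv ℝ f) x).flip v :=
      fderiv_clm_apply hdfx (differentiableAt_const v)
    rw [this]
    simp
  have hsym : IsSymmSndFDerivAt ℝ f x :=
    (hf.contDiffAt).isSymmSndFDerivAt (by norm_num)
  show fderiv ℝ (fun y => fderiv ℝ f y (Pi.single lam 1)) x (Pi.single ν 1)
      = fderiv ℝ (fun y => fderiv ℝ f y (Pi.single ν 1)) x (Pi.single lam 1)
  rw [key, key]
  exact hsym _ _

theorem degenerate_or_zero
    (Y Z : Fin 4 → ℝ) (B D : (Fin 4 → ℝ) → ℂ)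
    (hB : ContDiff ℝ 2 B) (hD : ContDiff ℝ 2 D)
    (eqB : ∀ ν lam : Fin 4, ∀ x,
      (1 / 4 : ℂ) * pd4 ν (pd4 lam B) x
        = ((Z lam * Z ν - Y lam * Y ν : ℝ) : ℂ) * B x
          + ((Y ν * Z lam - Y lam * Z ν : ℝ) : ℂ) * D x)
    (eqD : ∀ ν lam : Fin 4, ∀ x,
      (1 / 4 : ℂ) * pd4 ν (pd4 lam D) x
        = ((Z lam * Z ν - Y lam * Y ν : ℝ) : ℂ) * D x
          + ((Y ν * Z lam - Y lam * Z ν : ℝ) : ℂ) * B x) :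
    (∀ ν lam : Fin 4, Y ν * Z lam = Y lam * Z ν) ∨
    (∀ x, B x = 0 ∧ D x = 0) := by
  by_cases h : ∀ ν lam : Fin 4, Y ν * Z lam = Y lam * Z ν
  · exact Or.inl h
  · right
    push_neg at h
    obtain ⟨ν, lam, hne⟩ := h
    have hc : ((Y ν * Z lam - Y lam * Z ν : ℝ) : ℂ) ≠ 0 := by
      simp only [ne_eq, Complex.ofReal_eq_zero, sub_eq_zero]
      exact hne
    intro x
    have h1 := eqB ν lam x
    have h2 := eqB lam ν x
    rw [pd4_comm B hB ν lam x] at h1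
    rw [h1] at h2
    have h3 := eqD ν lam x
    have h4 := eqD lam ν x
    rw [pd4_comm D hD ν lam x] at h3
    rw [h3] at h4
    -- h2 : symmetric part equal, so antisym coefficient * D = antisym(flipped) * D ...
    have hD0 : D x = 0 := by
      have : ((Y ν * Z lam - Y lam * Z ν : ℝ) : ℂ) * D x
          = ((Y lam * Z ν - Y ν * Z lam : ℝ) : ℂ) * D x := by
        push_cast at h2 ⊢
        ring_nf at h2 ⊢
        linear_combination h2
      have h5 : (2 * ((Y ν * Z lam - Y lam * Z ν : ℝ) : ℂ)) * D x = 0 := by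
        push_cast at this ⊢
        linear_combination this
      rcases mul_eq_zero.1 h5 with h6 | h6
      · exact absurd h6 (by simpa using hc)
      · exact h6
    have hB0 : B x = 0 := by
      have : ((Y ν * Z lam - Y lam * Z ν : ℝ) : ℂ) * B x
          = ((Y lam * Z ν - Y ν * Z lam : ℝ) : ℂ) * B x := by
        push_cast at h4 ⊢
        ring_nf at h4 ⊢
        linear_combination h4
      have h5 : (2 * ((Y ν * Z lam - Y lam * Z ν : ℝ) : ℂ)) * B x = 0 := by
        push_cast at this ⊢
        linear_combination this
      rcases mul_eq_zero.1 h5 with h6 | h6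
      · exact absurd h6 (by simpa using hc)
      · exact h6
    exact ⟨hB0, hD0⟩
end
end

section
/- Let k = (k_0, k_1, k_2, k_3) ∈ ℂ⁴ with k ≠ 0 and let B : ℝ⁴ → ℂ be twice continuously differentiable satisfying ∂_ν ∂_λ B = k_ν k_λ B for all ν, λ = 0,…,3 on ℝ⁴. Then there exist constants C⁺, C⁻ ∈ ℂ such that B(x) = C⁺ exp(Σ_{ν=0}^{3} k_ν x^ν) + C⁻ exp(−Σ_{ν=0}^{3} k_ν x^ν) for all x ∈ ℝ⁴. -/
/-!
STATEMENT 12: If `B : ℝ⁴ → ℂ` is C² and satisfies `∂_ν∂_λ B = k_ν k_λ B` for a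
nonzero `k ∈ ℂ⁴`, then `B(x) = C⁺ exp(Σ_ν k_ν x^ν) + C⁻ exp(−Σ_ν k_ν x^ν)`.
-/

noncomputable section

lemma clm_pi4 (L : (Fin 4 → ℝ) →L[ℝ] ℂ) (v : Fin 4 → ℝ) :
    L v = ∑ ν : Fin 4, v ν • L (Pi.single ν 1) := by
  have hv : v = ∑ ν : Fin 4, v ν • (Pi.single ν 1 : Fin 4 → ℝ) := by
    funext j
    simp [Finset.sum_apply, Pi.single_apply]
  conv_lhs => rw [hv]
  rw [map_sum]
  simp

lemma fderiv_pi4 (f : (Fin 4 → ℝ) → ℂ) (x : Fin 4 → ℝ) (v : Fin 4 → ℝ) :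
    fderiv ℝ f x v = ∑ ν : Fin 4, v ν • pd4 ν f x :=
  clm_pi4 (fderiv ℝ f x) v

lemma line_deriv (f : (Fin 4 → ℝ) → ℂ) (hf : Differentiable ℝ f) (x v : Fin 4 → ℝ) (t : ℝ) :
    HasDerivAt (fun t : ℝ => f (x + t • v)) (fderiv ℝ f (x + t • v) v) t := by
  have hline : HasDerivAt (fun t : ℝ => x + t • v) v t := by
    simpa using ((hasDerivAt_id t).smul_const v).const_add x
  exact (hf (x + t • v)).hasFDerivAt.comp_hasDerivAt t hline

lemma pd4_diff (B : (Fin 4 → ℝ) → ℂ) (hB : ContDiff ℝ 2 B) (ν : Fin 4) :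
    Differentiable ℝ (pd4 ν B) := by
  have h1 : ContDiff ℝ 1 (fderiv ℝ B) := hB.fderiv_right (by norm_num)
  have : ContDiff ℝ 1 (fun x => fderiv ℝ B x (Pi.single ν 1)) :=
    h1.clm_apply contDiff_const
  exact this.differentiable one_ne_zero

lemma exists_exp_ne_one (c : ℂ) (hc : c ≠ 0) : ∃ T : ℝ, Complex.exp (c * T) ≠ 1 := by
  by_contra h
  push_neg at h
  have hd : HasDerivAt (fun T : ℝ => Complex.exp (c * (T : ℂ))) (Complex.exp (c * (0:ℝ)) * c) 0 := by
    have hid : HasDerivAt (fun T : ℝ => ((T : ℂ))) 1 0 := by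
      simpa using (hasDerivAt_id (0:ℝ)).ofReal_comp
    have := (hid.const_mul c).cexp
    simpa using this
  have hzero : HasDerivAt (fun T : ℝ => Complex.exp (c * (T : ℂ))) 0 0 := by
    have : (fun T : ℝ => Complex.exp (c * (T : ℂ))) = fun _ => 1 := funext h
    rw [this]; exact hasDerivAt_const 0 1
  have := hd.unique hzero
  simp at this
  exact hc this

lemma q_line_deriv (k : Fin 4 → ℂ) (B : (Fin 4 → ℝ) → ℂ) (hB : ContDiff ℝ 2 B)
    (heq : ∀ ν lam : Fin 4, ∀ x, pd4 ν (pd4 lam B) x = k ν * k lam * B x)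
    (μ : Fin 4) (ε : ℂ) (hε : ε * ε = 1) (x v : Fin 4 → ℝ) (t : ℝ) :
    HasDerivAt (fun t : ℝ => (k μ * B (x + t • v) + ε * pd4 μ B (x + t • v)) *
        Complex.exp (-(ε * ∑ ν : Fin 4, k ν * (((x + t • v) ν : ℝ) : ℂ))))
      ((∑ ν : Fin 4, ((v ν : ℝ) : ℂ) *
          (k μ * pd4 ν B (x + t • v) - k ν * pd4 μ B (x + t • v))) *
        Complex.exp (-(ε * ∑ ν : Fin 4, k ν * (((x + t • v) ν : ℝ) : ℂ)))) t := by
  have hsplit : ∀ u : ℝ, (∑ ν : Fin 4, k ν * (((x + u • v) ν : ℝ) : ℂ))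
      = (∑ ν : Fin 4, k ν * ((x ν : ℝ) : ℂ)) + (u : ℂ) * (∑ ν : Fin 4, k ν * ((v ν : ℝ) : ℂ)) := by
    intro u
    simp only [Fin.sum_univ_four, Pi.add_apply, Pi.smul_apply, smul_eq_mul]
    push_cast
    ring
  have h1 := line_deriv B (hB.differentiable two_ne_zero) x v t
  have h2 := line_deriv _ (pd4_diff B hB μ) x v t
  have h3 : HasDerivAt
      (fun u : ℝ => Complex.exp (-(ε * ∑ ν : Fin 4, k ν * (((x + u • v) ν : ℝ) : ℂ))))
      (Complex.exp (-(ε * ∑ ν : Fin 4, k ν * (((x + t • v) ν : ℝ) : ℂ))) *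
        (-(ε * ∑ ν : Fin 4, k ν * ((v ν : ℝ) : ℂ)))) t := by
    have hid : HasDerivAt (fun u : ℝ => ((u : ℂ))) 1 t := by
      simpa using (hasDerivAt_id t).ofReal_comp
    have hin : HasDerivAt
        (fun u : ℝ => -(ε * ((∑ ν : Fin 4, k ν * ((x ν : ℝ) : ℂ))
            + (u : ℂ) * (∑ ν : Fin 4, k ν * ((v ν : ℝ) : ℂ)))))
        (-(ε * ∑ ν : Fin 4, k ν * ((v ν : ℝ) : ℂ))) t := by
      have := (((hid.mul_const (∑ ν : Fin 4, k ν * ((v ν : ℝ) : ℂ))).const_add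
        (∑ ν : Fin 4, k ν * ((x ν : ℝ) : ℂ))).const_mul ε).neg
      simp only [one_mul] at this
      exact this
    have := hin.cexp
    simp only [← hsplit] at this
    exact this
  have H := ((h1.const_mul (k μ)).add (h2.const_mul ε)).mul h3
  refine H.congr_deriv ?_
  symm
  rw [fderiv_pi4, fderiv_pi4]
  simp only [Fin.sum_univ_four, Complex.real_smul, heq, hsplit]
  simp only [Pi.add_apply]
  set p := x + t • v
  linear_combination (pd4 μ B p *
    (k 0 * ((v 0 : ℝ) : ℂ) + k 1 * ((v 1 : ℝ) : ℂ) + k 2 * ((v 2 : ℝ) : ℂ) + k 3 * ((v 3 : ℝ) : ℂ)) *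
    Complex.exp (-(ε * ((k 0 * ((x 0:ℝ):ℂ) + k 1 * ((x 1:ℝ):ℂ) + k 2 * ((x 2:ℝ):ℂ) + k 3 * ((x 3:ℝ):ℂ))
      + (t:ℂ) * (k 0 * ((v 0:ℝ):ℂ) + k 1 * ((v 1:ℝ):ℂ) + k 2 * ((v 2:ℝ):ℂ) + k 3 * ((v 3:ℝ):ℂ)))))) * hε

lemma hfun_const (k : Fin 4 → ℂ) (B : (Fin 4 → ℝ) → ℂ) (hB : ContDiff ℝ 2 B)
    (heq : ∀ ν lam : Fin 4, ∀ x, pd4 ν (pd4 lam B) x = k ν * k lam * B x)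
    (μ ν : Fin 4) (x : Fin 4 → ℝ) :
    k μ * pd4 ν B x - k ν * pd4 μ B x = k μ * pd4 ν B 0 - k ν * pd4 μ B 0 := by
  have H : ∀ t : ℝ, HasDerivAt
      (fun t : ℝ => k μ * pd4 ν B ((0 : Fin 4 → ℝ) + t • x) - k ν * pd4 μ B ((0 : Fin 4 → ℝ) + t • x))
      0 t := by
    intro t
    have h1 := (line_deriv _ (pd4_diff B hB ν) 0 x t).const_mul (k μ)
    have h2 := (line_deriv _ (pd4_diff B hB μ) 0 x t).const_mul (k ν)
    have hz : k μ * fderiv ℝ (pd4 ν B) ((0 : Fin 4 → ℝ) + t • x) x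
        - k ν * fderiv ℝ (pd4 μ B) ((0 : Fin 4 → ℝ) + t • x) x = 0 := by
      rw [fderiv_pi4, fderiv_pi4]
      simp only [Fin.sum_univ_four, Complex.real_smul, heq]
      ring
    exact hz ▸ (h1.sub h2)
  have hdiff : Differentiable ℝ (fun t : ℝ =>
      k μ * pd4 ν B ((0 : Fin 4 → ℝ) + t • x) - k ν * pd4 μ B ((0 : Fin 4 → ℝ) + t • x)) :=
    fun t => (H t).differentiableAt
  have h01 := is_const_of_deriv_eq_zero hdiff (fun t => (H t).deriv) 1 0
  simpa using h01

theorem exponential_solution_form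
    (k : Fin 4 → ℂ) (hk : k ≠ 0)
    (B : (Fin 4 → ℝ) → ℂ) (hB : ContDiff ℝ 2 B)
    (heq : ∀ ν lam : Fin 4, ∀ x, pd4 ν (pd4 lam B) x = k ν * k lam * B x) :
    ∃ Cp Cm : ℂ, ∀ x : Fin 4 → ℝ,
      B x = Cp * Complex.exp (∑ ν : Fin 4, k ν * (x ν : ℂ))
        + Cm * Complex.exp (-∑ ν : Fin 4, k ν * (x ν : ℂ)) := by
  obtain ⟨μ, hkμ⟩ : ∃ μ, k μ ≠ 0 := by
    by_contra h; push_neg at h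
    exact hk (funext fun i => h i)
  set c : Fin 4 → ℂ := fun ν => k μ * pd4 ν B 0 - k ν * pd4 μ B 0 with hcdef
  have hcx : ∀ ν x, k μ * pd4 ν B x - k ν * pd4 μ B x = c ν := by
    intro ν x
    simp only [hcdef]
    exact hfun_const k B hB heq μ ν x
  set Q : ℂ → (Fin 4 → ℝ) → ℂ := fun ε y =>
    (k μ * B y + ε * pd4 μ B y) *
      Complex.exp (-(ε * ∑ ν : Fin 4, k ν * ((y ν : ℝ) : ℂ))) with hQdef
  have hq : ∀ (ε : ℂ), ε * ε = 1 → ∀ (x v : Fin 4 → ℝ) (t : ℝ),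
      HasDerivAt (fun t : ℝ => Q ε (x + t • v))
        ((∑ ν : Fin 4, ((v ν : ℝ) : ℂ) * c ν) *
          Complex.exp (-(ε * ∑ ν : Fin 4, k ν * (((x + t • v) ν : ℝ) : ℂ)))) t := by
    intro ε hε x v t
    have h := q_line_deriv k B hB heq μ ε hε x v t
    simp only [hQdef]
    simpa only [hcx] using h
  have hconst : ∀ (ε : ℂ), ε * ε = 1 → ∀ (x v : Fin 4 → ℝ),
      (∑ ν : Fin 4, ((v ν : ℝ) : ℂ) * c ν) = 0 → ∀ t : ℝ, Q ε (x + t • v) = Q ε x := by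
    intro ε hε x v hzero t
    have H : ∀ u : ℝ, HasDerivAt (fun u : ℝ => Q ε (x + u • v)) 0 u := by
      intro u
      have h := hq ε hε x v u
      rw [hzero, zero_mul] at h
      exact h
    have h := is_const_of_deriv_eq_zero (fun u => (H u).differentiableAt)
      (fun u => (H u).deriv) t 0
    simpa using h
  have hcμ : c μ = 0 := by simp only [hcdef]; ring
  have hsingle_sum : ∀ ν : Fin 4,
      (∑ lam : Fin 4, (((Pi.single ν 1 : Fin 4 → ℝ) lam : ℝ) : ℂ) * c lam) = c ν := by
    intro ν
    simp [Pi.single_apply, apply_ite (fun r : ℝ => (r : ℂ)), ite_mul,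
      Finset.sum_ite_eq' Finset.univ ν c]
  obtain ⟨T, hT⟩ := exists_exp_ne_one (-(k μ)) (neg_ne_zero.mpr hkμ)
  have hc0 : ∀ ν, c ν = 0 := by
    intro ν
    have hμmove : ∀ y : Fin 4 → ℝ, Q 1 (y + T • (Pi.single μ 1 : Fin 4 → ℝ)) = Q 1 y :=
      fun y => hconst 1 (by ring) y _ (by rw [hsingle_sum μ, hcμ]) T
    have hFzero : ∀ t : ℝ, Q 1 ((0 : Fin 4 → ℝ) + t • (Pi.single ν 1 : Fin 4 → ℝ))
        - Q 1 (T • (Pi.single μ 1 : Fin 4 → ℝ) + t • (Pi.single ν 1 : Fin 4 → ℝ)) = 0 := by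
      intro t
      rw [sub_eq_zero,
        show T • (Pi.single μ 1 : Fin 4 → ℝ) + t • (Pi.single ν 1 : Fin 4 → ℝ)
          = ((0 : Fin 4 → ℝ) + t • (Pi.single ν 1 : Fin 4 → ℝ))
              + T • (Pi.single μ 1 : Fin 4 → ℝ) by rw [zero_add, add_comm],
        hμmove]
    have hd1 := hq 1 (by ring) 0 (Pi.single ν 1) 0
    have hd2 := hq 1 (by ring) (T • (Pi.single μ 1 : Fin 4 → ℝ)) (Pi.single ν 1) 0
    have hDF := hd1.sub hd2
    rw [show ((fun t : ℝ => Q 1 ((0 : Fin 4 → ℝ) + t • (Pi.single ν 1 : Fin 4 → ℝ))) - fun t : ℝ => Q 1 (T • (Pi.single μ 1 : Fin 4 → ℝ) + t • (Pi.single ν 1 : Fin 4 → ℝ))) = fun _ => 0 from funext hFzero] at hDF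
    have h0 := hDF.unique (hasDerivAt_const 0 0)
    rw [hsingle_sum ν] at h0
    have e1 : (∑ lam : Fin 4, k lam *
        ((((0 : Fin 4 → ℝ) + (0:ℝ) • (Pi.single ν 1 : Fin 4 → ℝ)) lam : ℝ) : ℂ)) = 0 := by
      simp
    have e2 : (∑ lam : Fin 4, k lam *
        (((T • (Pi.single μ 1 : Fin 4 → ℝ) + (0:ℝ) • (Pi.single ν 1 : Fin 4 → ℝ)) lam : ℝ) : ℂ))
        = k μ * T := by
      simp [Pi.single_apply, apply_ite (fun r : ℝ => (r : ℂ)), mul_ite,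
        Finset.sum_ite_eq' Finset.univ μ]
    rw [e1, e2] at h0
    have hne : (1 : ℂ) - Complex.exp (-(1 * (k μ * (T : ℂ)))) ≠ 0 := by
      rw [sub_ne_zero]
      intro hcontra
      apply hT
      rw [show (-(k μ)) * (T : ℂ) = -(1 * (k μ * (T : ℂ))) by ring, ← hcontra]
    have : c ν * ((1 : ℂ) - Complex.exp (-(1 * (k μ * (T : ℂ))))) = 0 := by
      have : Complex.exp (-(1 * (0:ℂ))) = 1 := by simp
      linear_combination h0 - c ν * this
    exact (mul_eq_zero.mp this).resolve_right hne
  have hQc : ∀ ε : ℂ, ε * ε = 1 → ∀ x, Q ε x = Q ε 0 := by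
    intro ε hε x
    have hz : (∑ ν : Fin 4, ((x ν : ℝ) : ℂ) * c ν) = 0 := by simp [hc0]
    have h := hconst ε hε 0 x hz 1
    simpa using h
  refine ⟨Q 1 0 / (2 * k μ), Q (-1) 0 / (2 * k μ), fun x => ?_⟩
  rw [← hQc 1 (by ring) x, ← hQc (-1) (by ring) x]
  simp only [hQdef, one_mul, neg_mul, neg_neg]
  rw [Complex.exp_neg]
  have hE := Complex.exp_ne_zero (∑ ν : Fin 4, k ν * ((x ν : ℝ) : ℂ))
  field_simp
  ring
end
end
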